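/- arXiv:2307.00912 — 6 statements merged into one kernel-verified Lean document; each statement's English description precedes it below -/
import Mathlib

section
/- Every strongly connected finite tournament on at least 3 vertices contains a directed Hamilton cycle. -/
def IsTournament {V : Type*} (T : V → V → Prop) : Prop :=
  (∀ v, ¬ T v v) ∧ ∀ u v : V, u ≠ v → (T u v ↔ ¬ T v u)

section CamionAux
variable {V : Type*} {T : V → V → Prop}

private lemma crossLemma {S : V → Prop} (h : ∀ u x, ¬ S u → S x → ¬ T u x)
    {a b : V} (hab : Relation.ReflTransGen T a b) (ha : ¬ S a) : ¬ S b := by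
  induction hab with
  | refl => exact ha
  | tail h' e ih => exact fun hb => h _ _ ih hb e

def IsCycleL (T : V → V → Prop) (p : List V) : Prop :=
  p.Nodup ∧ p.Chain' T ∧ ∀ h : p ≠ [], T (p.getLast h) (p.head h)

def CaseA (T : V → V → Prop) (v : V) (p : List V) : Prop :=
  ∃ (n : ℕ) (a b : V), (p.rotate n).getLast? = some a ∧ (p.rotate n).head? = some b ∧ T a v ∧ T v b

lemma IsCycleL.adj {p : List V} (hc : IsCycleL T p) (hp : p ≠ []) (i : ℕ) :
    T (p[i % p.length]'(Nat.mod_lt _ (List.length_pos_iff.2 hp)))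
      (p[(i+1) % p.length]'(Nat.mod_lt _ (List.length_pos_iff.2 hp))) := by
  have hl : 0 < p.length := List.length_pos_iff.2 hp
  have key : (i + 1) % p.length = (i % p.length + 1) % p.length := (Nat.mod_add_mod i p.length 1).symm
  by_cases h2 : i % p.length + 1 < p.length
  · have h3 : (i + 1) % p.length = i % p.length + 1 := by rw [key, Nat.mod_eq_of_lt h2]
    have := List.isChain_iff_getElem.1 hc.2.1 (i % p.length) (by omega)
    convert this using 2
  · have h4 : i % p.length + 1 = p.length := by have := Nat.mod_lt i hl; omega
    have h3 : (i + 1) % p.length = 0 := by rw [key, h4, Nat.mod_self]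
    have hw := hc.2.2 hp
    rw [List.getLast_eq_getElem, List.head_eq_getElem_zero hp] at hw
    convert hw using 2 <;> omega

lemma IsCycleL.rotate {p : List V} (hc : IsCycleL T p) (n : ℕ) : IsCycleL T (p.rotate n) := by
  by_cases hp : p = []
  · subst hp; simpa [List.rotate] using hc
  have hl : 0 < p.length := List.length_pos_iff.2 hp
  have hq : p.rotate n ≠ [] := by
    intro h; apply hp; simpa using congrArg List.length h
  refine ⟨List.nodup_rotate.2 hc.1, ?_, ?_⟩
  · rw [List.Chain', List.isChain_iff_getElem]
    intro i hi
    rw [List.length_rotate] at hi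
    simp only [List.get_eq_getElem, List.getElem_rotate, List.length_rotate]
    have h2 : i + 1 + n = (i + n) + 1 := by omega
    rw [h2]
    exact hc.adj hp (i + n)
  · intro h
    rw [List.getLast_eq_getElem, List.head_eq_getElem_zero h]
    simp only [List.getElem_rotate, List.length_rotate]
    have this2 := hc.adj hp (p.length - 1 + n)
    have e : (p.length - 1 + n + 1) % p.length = (0 + n) % p.length := by
      rw [show p.length - 1 + n + 1 = p.length + n from by omega, Nat.add_mod_left]
      simp
    simp only [e] at this2
    exact this2

lemma rot_pair (q : List V) (i : ℕ) (hi : i + 1 < q.length) :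
    (q.rotate (i+1)).getLast? = some (q[i]'(by omega)) ∧
    (q.rotate (i+1)).head? = some (q[i+1]'hi) := by
  constructor
  · rw [List.getLast?_eq_getElem?, List.length_rotate,
      List.getElem?_eq_getElem (by rw [List.length_rotate]; omega)]
    congr 1
    rw [List.getElem_rotate]
    have h1 : (q.length - 1 + (i+1)) % q.length = i := by
      rw [show q.length - 1 + (i+1) = q.length + i from by omega, Nat.add_mod_left]
      exact Nat.mod_eq_of_lt (by omega)
    congr 1
  · rw [List.head?_rotate hi, List.getElem?_eq_getElem hi]

lemma chain_prop {P : V → Prop} :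
    ∀ {l : List V}, l.Chain' (fun a b => P a → P b) → ∀ (h : l ≠ []), P (l.head h) → ∀ y ∈ l, P y
  | [], _, h, _, _, _ => absurd rfl h
  | [a], _, _, ha, y, hy => by simp at hy; subst hy; simpa using ha
  | a :: b :: l, hch, _, ha, y, hy => by
    rw [List.Chain', List.isChain_cons_cons] at hch
    rcases List.mem_cons.1 hy with rfl | hy'
    · simpa using ha
    · exact chain_prop hch.2 (by simp) (hch.1 (by simpa using ha)) y hy'

lemma classify (hT : IsTournament T) {p : List V} (hp : p ≠ [])
    {v : V} (hv : v ∉ p) (hA : ¬ CaseA T v p) :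
    (∀ x ∈ p, T x v) ∨ (∀ x ∈ p, T v x) := by
  by_cases hex : ∃ x ∈ p, T x v
  · left
    obtain ⟨x, hx, hxv⟩ := hex
    obtain ⟨i, hi, rfl⟩ := List.mem_iff_getElem.1 hx
    have hq : p.rotate i ≠ [] := by
      intro h; apply hp; simpa using congrArg List.length h
    have hhead : (p.rotate i).head hq = p[i] := by
      have h1 := List.head?_rotate hi (l := p)
      rw [List.head?_eq_head hq, List.getElem?_eq_getElem hi] at h1
      exact Option.some_injective _ h1
    have hch : (p.rotate i).Chain' (fun a b => T a v → T b v) := by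
      rw [List.Chain', List.isChain_iff_getElem]
      intro j hj
      intro hjv
      by_contra hnb
      have hne : v ≠ (p.rotate i)[j+1]'(by omega) := by
        intro h
        exact hv (List.mem_rotate.1 (h ▸ List.getElem_mem _))
      have hbv : T v ((p.rotate i)[j+1]'(by omega)) := (hT.2 v _ hne).2 hnb
      apply hA
      have hjlt : j + 1 < (p.rotate i).length := by omega
      obtain ⟨hL, hH⟩ := rot_pair (p.rotate i) j hjlt
      rw [List.rotate_rotate] at hL hH
      exact ⟨i + (j+1), _, _, hL, hH, hjv, hbv⟩
    intro y hy
    exact chain_prop hch hq (by rw [hhead]; exact hxv) y (List.mem_rotate.2 hy)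
  · right
    push_neg at hex
    intro x hx
    have hne : v ≠ x := fun h => hv (h ▸ hx)
    exact (hT.2 v x hne).2 (hex x hx)
lemma extend (hT : IsTournament T) (hsc : ∀ x y : V, Relation.ReflTransGen T x y)
    {p : List V} (hc : IsCycleL T p) (hp : p ≠ []) {v : V} (hv : v ∉ p) :
    ∃ q : List V, IsCycleL T q ∧ p.length < q.length := by
  by_cases hA : ∃ w, w ∉ p ∧ CaseA T w p
  · obtain ⟨w, hw, n, a, b, hL, hH, haw, hwb⟩ := hA
    have hq0 : p.rotate n ≠ [] := by
      intro h; apply hp; simpa using congrArg List.length h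
    have hc0 := hc.rotate n
    rw [List.getLast?_eq_getLast_of_ne_nil hq0] at hL
    rw [List.head?_eq_head hq0] at hH
    have ha : a = (p.rotate n).getLast hq0 := (Option.some_injective _ hL).symm
    have hb : b = (p.rotate n).head hq0 := (Option.some_injective _ hH).symm
    subst ha hb
    refine ⟨p.rotate n ++ [w], ⟨?_, ?_, ?_⟩, by simp⟩
    · rw [List.nodup_append']
      refine ⟨hc0.1, List.nodup_singleton _, ?_⟩
      intro x hx hx'
      rw [List.mem_singleton] at hx'
      subst hx'
      exact hw (List.mem_rotate.1 hx)
    · rw [List.Chain', List.isChain_append]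
      refine ⟨hc0.2.1, List.isChain_singleton _, ?_⟩
      intro x hx y hy
      rw [List.head?_cons, Option.mem_some_iff] at hy
      rw [List.getLast?_eq_getLast_of_ne_nil hq0, Option.mem_some_iff] at hx
      subst hx; subst hy
      exact haw
    · intro h
      have h1 : (p.rotate n ++ [w]).getLast h = w := List.getLast_append_singleton _
      have h2 : (p.rotate n ++ [w]).head h = (p.rotate n).head hq0 :=
        List.head_append_of_ne_nil _
      rw [h1, h2]
      exact hwb
  · push_neg at hA
    have hclass : ∀ w, w ∉ p → (∀ x ∈ p, T x w) ∨ (∀ x ∈ p, T w x) :=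
      fun w hw => classify hT hp hw (hA w hw)
    have hAne : ∃ a, a ∉ p ∧ ∀ x ∈ p, T a x := by
      by_contra hno
      push_neg at hno
      have hcross : ∀ u x, ¬ (u ∈ p) → (x ∈ p) → ¬ T u x := by
        intro u x hu hx
        rcases hclass u hu with hB | hA'
        · have hne : u ≠ x := fun h => hu (h ▸ hx)
          intro h
          exact ((hT.2 u x hne).1 h) (hB x hx)
        · exfalso
          obtain ⟨x', hx', hnx'⟩ := hno u hu
          exact hnx' (hA' x' hx')
      exact (crossLemma hcross (hsc v (p.head hp)) hv) (List.head_mem hp)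
    have hBne : ∃ b, b ∉ p ∧ ∀ x ∈ p, T x b := by
      by_contra hno
      push_neg at hno
      have hcross : ∀ u x, ¬ (u ∉ p) → (x ∉ p) → ¬ T u x := by
        intro u x hu hx
        rw [not_not] at hu
        rcases hclass x hx with hB | hA'
        · exfalso
          obtain ⟨x', hx', hnx'⟩ := hno x hx
          exact hnx' (hB x' hx')
        · intro h
          have hne : u ≠ x := fun hh => hx (hh ▸ hu)
          exact ((hT.2 u x hne).1 h) (hA' u hu)
      exact (crossLemma hcross (hsc (p.head hp) v) (not_not_intro (List.head_mem hp))) hv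
    obtain ⟨a0, ha0p, ha0⟩ := hAne
    obtain ⟨b0, hb0p, hb0⟩ := hBne
    by_cases hba : ∃ b a, (b ∉ p ∧ ∀ x ∈ p, T x b) ∧ (a ∉ p ∧ ∀ x ∈ p, T a x) ∧ T b a
    · obtain ⟨b, a, ⟨hbp, hb⟩, ⟨hap, ha⟩, hTba⟩ := hba
      refine ⟨p ++ [b, a], ⟨?_, ?_, ?_⟩, by simp⟩
      · rw [List.nodup_append']
        refine ⟨hc.1, ?_, ?_⟩
        · have hne : b ≠ a := fun h => hT.1 a (h ▸ hTba)
          simp [hne]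
        · intro x hx h2
          simp only [List.mem_cons, List.mem_singleton, List.not_mem_nil, or_false] at h2
          rcases h2 with rfl | rfl
          exacts [hbp hx, hap hx]
      · rw [List.Chain', List.isChain_append]
        refine ⟨hc.2.1, List.isChain_pair.2 hTba, ?_⟩
        intro x hx y hy
        rw [List.head?_cons, Option.mem_some_iff] at hy
        rw [List.getLast?_eq_getLast_of_ne_nil hp, Option.mem_some_iff] at hx
        subst hx; subst hy
        exact hb _ (List.getLast_mem hp)
      · intro h
        have h1 : (p ++ [b, a]).getLast h = a := by
          rw [List.getLast_append_of_ne_nil _ (by simp)]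
          rfl
        have h2 : (p ++ [b, a]).head h = p.head hp := List.head_append_of_ne_nil _
        rw [h1, h2]
        exact ha _ (List.head_mem hp)
    · exfalso
      push_neg at hba
      have hcross : ∀ u x, ¬ (u ∉ p ∧ ∀ y ∈ p, T u y) → (x ∉ p ∧ ∀ y ∈ p, T x y) → ¬ T u x := by
        intro u x hu hx
        by_cases hup : u ∈ p
        · have hne : u ≠ x := fun h => hx.1 (h ▸ hup)
          intro h
          exact ((hT.2 u x hne).1 h) (hx.2 u hup)
        · rcases hclass u hup with hB | hA'
          · exact hba u x ⟨hup, hB⟩ ⟨hx.1, hx.2⟩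
          · exact absurd ⟨hup, hA'⟩ hu
      exact (crossLemma hcross (hsc (p.head hp) a0)
        (fun hS => hS.1 (List.head_mem hp))) ⟨ha0p, ha0⟩
lemma triangle [Fintype V] (hT : IsTournament T) (hcard : 3 ≤ Fintype.card V)
    (hsc : ∀ x y : V, Relation.ReflTransGen T x y) :
    ∃ p : List V, IsCycleL T p ∧ p ≠ [] := by
  have : 0 < Fintype.card V := by omega
  have hne : Nonempty V := Fintype.card_pos_iff.1 this
  obtain ⟨v⟩ := hne
  obtain ⟨u, hu⟩ := Fintype.exists_ne_of_one_lt_card (by omega) v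
  obtain ⟨c, hvc, -⟩ := (Relation.ReflTransGen.cases_head (hsc v u)).resolve_left hu.symm
  by_cases hex : ∃ a b, T v a ∧ T b v ∧ T a b
  · obtain ⟨a, b, hva, hbv, hab⟩ := hex
    have hva' : v ≠ a := fun h => hT.1 v (h ▸ hva)
    have hab' : a ≠ b := fun h => hT.1 a (h ▸ hab)
    have hbv' : b ≠ v := fun h => hT.1 v (h ▸ hbv)
    refine ⟨[v, a, b], ⟨?_, ?_, ?_⟩, by simp⟩
    · have hvb' : v ≠ b := fun h => hT.1 b (h ▸ hbv)
      simp [hva', hab', hvb']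
    · simp [List.Chain', List.isChain_cons_cons, List.isChain_pair, hva, hab]
    · intro h
      simpa [List.getLast, List.head] using hbv
  · exfalso
    push_neg at hex
    have hcross : ∀ u' x, ¬ (T u' v ∨ u' = v) → (T x v ∨ x = v) → ¬ T u' x := by
      intro u' x hu' hx
      push_neg at hu'
      have hvu' : T v u' := (hT.2 v u' (Ne.symm hu'.2)).2 hu'.1
      rcases hx with hxv | rfl
      · exact hex u' x hvu' hxv
      · exact fun h => hu'.1 h
    have hcv : ¬ (T c v ∨ c = v) := by
      push_neg
      have hcv' : c ≠ v := fun h => hT.1 v (h ▸ hvc)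
      exact ⟨(hT.2 v c hcv'.symm).1 hvc, hcv'⟩
    exact (crossLemma hcross (hsc c v) hcv) (Or.inr rfl)

lemma driver [Fintype V] (hT : IsTournament T) (hsc : ∀ x y : V, Relation.ReflTransGen T x y) :
    ∀ (k : ℕ) (p : List V), IsCycleL T p → p ≠ [] → Fintype.card V ≤ p.length + k →
      ∃ q : List V, IsCycleL T q ∧ ∀ v : V, v ∈ q := by
  intro k
  induction k with
  | zero =>
    intro p hc hp hcard
    by_cases hall : ∀ v : V, v ∈ p
    · exact ⟨p, hc, hall⟩
    · exfalso
      push_neg at hall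
      obtain ⟨v, hv⟩ := hall
      have hnd : (v :: p).Nodup := List.nodup_cons.2 ⟨hv, hc.1⟩
      have := hnd.length_le_card
      simp at this
      omega
  | succ k ih =>
    intro p hc hp hcard
    by_cases hall : ∀ v : V, v ∈ p
    · exact ⟨p, hc, hall⟩
    · push_neg at hall
      obtain ⟨v, hv⟩ := hall
      obtain ⟨q, hq, hlen⟩ := extend hT hsc hc hp hv
      have hq0 : q ≠ [] := by
        intro h
        rw [h] at hlen
        simp at hlen
      exact ih q hq hq0 (by omega)
end CamionAux

/-- Every strongly connected finite tournament on at least 3 vertices contains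
a directed Hamilton cycle. -/
theorem stmt1 {V : Type*} [Fintype V] (T : V → V → Prop) (hT : IsTournament T)
    (hcard : 3 ≤ Fintype.card V)
    (hsc : ∀ x y : V, Relation.ReflTransGen T x y) :
    ∃ p : List V, p.Nodup ∧ (∀ v : V, v ∈ p) ∧ p.Chain' T ∧
      ∀ h : p ≠ [], T (p.getLast h) (p.head h) := by
  obtain ⟨p3, hc3, hp3⟩ := triangle hT hcard hsc
  obtain ⟨q, hq, hall⟩ := driver hT hsc (Fintype.card V) p3 hc3 hp3 (Nat.le_add_left _ _)
  exact ⟨q, hq.1, hall, hq.2.1, hq.2.2⟩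
end

section
/- Let T be a tournament on n ≥ 3 vertices with n > ℓ ≥ 3 and 0 < γ ≤ 1/6. If T has an H(ℓ+1, γ)-partition, then T has an H(ℓ, γ)-partition. Consequently, every tournament on n vertices has an H(ℓ, γ)-partition for every 3 ≤ ℓ ≤ n. -/
open scoped Classical
set_option linter.unusedSectionVars false
set_option linter.unusedVariables false

/-- `(W_1,…,W_r, w_1,…,w_{r-1})` is an `H(ℓ,γ)`-partition of the tournament `T`:
the `W_i` are pairwise disjoint, the `w_i` are distinct and outside all `W_i`,
together they cover the vertex set, `γℓ ≤ |W_i| ≤ ℓ`, and for each `i`,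
`W_i ⇒ w_i ⇒ W_{i+1}`. -/
def IsHPartition {V : Type*} [Fintype V] [DecidableEq V] (T : V → V → Prop)
    (ℓ : ℕ) (γ : ℝ) (Ws : List (Finset V)) (ws : List V) : Prop :=
  ws.length + 1 = Ws.length ∧
  Ws.Pairwise Disjoint ∧
  ws.Nodup ∧
  (∀ w ∈ ws, ∀ W ∈ Ws, w ∉ W) ∧
  (∀ v : V, (∃ W ∈ Ws, v ∈ W) ∨ v ∈ ws) ∧
  (∀ W ∈ Ws, γ * ℓ ≤ (W.card : ℝ) ∧ W.card ≤ ℓ) ∧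
  (∀ i : ℕ, ∀ w ∈ ws[i]?,
    (∀ W ∈ Ws[i]?, ∀ v ∈ W, T v w) ∧
    (∀ W ∈ Ws[i + 1]?, ∀ v ∈ W, T w v))

namespace HAux

variable {V : Type*} [DecidableEq V] {T : V → V → Prop}

def Arc (T : V → V → Prop) (Ws : List (Finset V)) (ws : List V) : Prop :=
  ∀ i : ℕ, ∀ w ∈ ws[i]?,
    (∀ W ∈ Ws[i]?, ∀ v ∈ W, T v w) ∧
    (∀ W ∈ Ws[i + 1]?, ∀ v ∈ W, T w v)

lemma arc_nil (T : V → V → Prop) (Ws : List (Finset V)) : Arc T Ws ([] : List V) := by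
  intro i w hw
  simp at hw

lemma arc_cons {X : Finset V} {Xs : List (Finset V)} {y : V} {ys : List V} :
    Arc T (X :: Xs) (y :: ys) ↔
      (∀ v ∈ X, T v y) ∧ (∀ Z ∈ Xs[0]?, ∀ v ∈ Z, T y v) ∧ Arc T Xs ys := by
  constructor
  · intro h
    refine ⟨fun v hv => (h 0 y rfl).1 X rfl v hv, fun Z hZ => (h 0 y rfl).2 Z (by simpa using hZ), ?_⟩
    intro i w hw
    have := h (i+1) w (by simpa using hw)
    simpa using this
  · rintro ⟨h1, h2, h3⟩ i w hw
    cases i with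
    | zero =>
      simp only [List.getElem?_cons_zero] at hw
      obtain rfl : y = w := by simpa using hw
      constructor
      · intro W' hW'
        obtain rfl : X = W' := by simpa using hW'
        exact h1
      · intro Z hZ
        exact h2 Z (by simpa using hZ)
    | succ i =>
      have := h3 i w (by simpa using hw)
      simpa using this

def elems (Ws : List (Finset V)) (ws : List V) : Finset V :=
  Ws.foldr (· ∪ ·) ∅ ∪ ws.toFinset

lemma mem_foldr {v : V} {Ws : List (Finset V)} :
    v ∈ Ws.foldr (· ∪ ·) ∅ ↔ ∃ W ∈ Ws, v ∈ W := by
  induction Ws with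
  | nil => simp
  | cons W Ws ih => simp [ih]

lemma mem_elems {v : V} {Ws : List (Finset V)} {ws : List V} :
    v ∈ elems Ws ws ↔ (∃ W ∈ Ws, v ∈ W) ∨ v ∈ ws := by
  simp [elems, mem_foldr]

lemma subset_elems {W : Finset V} {Ws : List (Finset V)} {ws : List V} (h : W ∈ Ws) :
    W ⊆ elems Ws ws := fun v hv => mem_elems.mpr (Or.inl ⟨W, h, hv⟩)

lemma mem_elems_of_mem {w : V} {Ws : List (Finset V)} {ws : List V} (h : w ∈ ws) :
    w ∈ elems Ws ws := mem_elems.mpr (Or.inr h)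

lemma disjoint_elems {W : Finset V} {Ws : List (Finset V)} {ws : List V}
    (h1 : ∀ X ∈ Ws, Disjoint W X) (h2 : ∀ w ∈ ws, w ∉ W) :
    Disjoint W (elems Ws ws) := by
  rw [Finset.disjoint_right]
  intro v hv hvW
  rcases mem_elems.mp hv with ⟨X, hX, hvX⟩ | hvws
  · exact (Finset.disjoint_left.mp (h1 X hX)) hvW hvX
  · exact h2 v hvws hvW


lemma flip_tournament (hT : IsTournament T) : IsTournament (fun a b => T b a) :=
  ⟨hT.1, fun u v huv => by
    have := hT.2 v u huv.symm
    tauto⟩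

lemma small (hT : IsTournament T) {k : ℕ} (hk : 1 ≤ k) (A : Finset V)
    (h : ∀ v ∈ A, (A.filter (fun u => T v u)).card < k) : A.card < 2 * k := by
  rcases A.eq_empty_or_nonempty with rfl | hA
  · simp; omega
  -- for each v ∈ A, out-nbrs and in-nbrs partition A.erase v
  have key : ∀ v ∈ A, (A.filter (fun u => T v u)).card + (A.filter (fun u => T u v)).card
      + 1 = A.card := by
    intro v hv
    have hdisj : Disjoint (A.filter (fun u => T v u)) (A.filter (fun u => T u v)) := by
      rw [Finset.disjoint_left]
      intro u hu1 hu2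
      have h1 := (Finset.mem_filter.mp hu1).2
      have h2 := (Finset.mem_filter.mp hu2).2
      have hne : u ≠ v := by rintro rfl; exact hT.1 u h1
      exact ((hT.2 u v hne).mp h2) h1
    have hunion : A.filter (fun u => T v u) ∪ A.filter (fun u => T u v) = A.erase v := by
      ext u
      simp only [Finset.mem_union, Finset.mem_filter, Finset.mem_erase]
      constructor
      · rintro (⟨hu, ht⟩ | ⟨hu, ht⟩)
        · exact ⟨fun he => hT.1 v (he ▸ ht), hu⟩
        · exact ⟨fun he => hT.1 v (he ▸ ht), hu⟩
      · rintro ⟨hne, hu⟩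
        by_cases ht : T v u
        · exact Or.inl ⟨hu, ht⟩
        · exact Or.inr ⟨hu, (hT.2 u v hne).mpr ht⟩
    have h2 := Finset.card_union_of_disjoint hdisj
    rw [hunion, Finset.card_erase_of_mem hv] at h2
    have := Finset.card_pos.mpr ⟨v, hv⟩
    omega
  have hsum : (∑ v ∈ A, (A.filter (fun u => T v u)).card)
      = ∑ v ∈ A, (A.filter (fun u => T u v)).card := by
    simp only [Finset.card_filter]
    rw [Finset.sum_comm]
  have htot : (∑ v ∈ A, ((A.filter (fun u => T v u)).card + (A.filter (fun u => T u v)).card + 1))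
      = A.card * A.card := by
    rw [Finset.sum_congr rfl key, Finset.sum_const, smul_eq_mul]
  rw [Finset.sum_add_distrib, Finset.sum_add_distrib, ← hsum, Finset.sum_const, smul_eq_mul,
    mul_one] at htot
  have hb : (∑ v ∈ A, ((A.filter (fun u => T v u)).card + 1)) ≤ A.card * k := by
    calc (∑ v ∈ A, ((A.filter (fun u => T v u)).card + 1)) ≤ ∑ _v ∈ A, k :=
          Finset.sum_le_sum (fun v hv => by have := h v hv; omega)
      _ = A.card * k := by rw [Finset.sum_const, smul_eq_mul]
  rw [Finset.sum_add_distrib, Finset.sum_const, smul_eq_mul, mul_one] at hb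
  have hApos : 1 ≤ A.card := Finset.card_pos.mpr hA
  by_contra hcon2
  push_neg at hcon2
  have hprod : 2 * k * A.card ≤ A.card * A.card := Nat.mul_le_mul_right _ (by omega)
  nlinarith [htot, hb, hprod, hApos]

lemma exists_mid (hT : IsTournament T) {k : ℕ} (hk : 1 ≤ k) (W : Finset V)
    (hW : 4 * k ≤ W.card + 1) :
    ∃ w ∈ W, k ≤ (W.filter (fun u => T u w)).card ∧ k ≤ (W.filter (fun u => T w u)).card := by
  by_contra hcon
  push_neg at hcon
  set A := W.filter (fun v => (W.filter (fun u => T v u)).card < k) with hAdef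
  set B := W.filter (fun v => (W.filter (fun u => T u v)).card < k) with hBdef
  have hAcard : A.card < 2 * k := by
    apply small hT hk
    intro v hv
    have hv' := (Finset.mem_filter.mp hv).2
    calc (A.filter (fun u => T v u)).card ≤ (W.filter (fun u => T v u)).card :=
          Finset.card_le_card (Finset.filter_subset_filter _ (Finset.filter_subset _ _))
      _ < k := hv'
  have hBcard : B.card < 2 * k := by
    apply small (flip_tournament hT) hk
    intro v hv
    have hv' := (Finset.mem_filter.mp hv).2
    calc (B.filter (fun u => T u v)).card ≤ (W.filter (fun u => T u v)).card :=
          Finset.card_le_card (Finset.filter_subset_filter _ (Finset.filter_subset _ _))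
      _ < k := hv'
  have hWsub : W ⊆ A ∪ B := by
    intro w hw
    by_cases hin : k ≤ (W.filter (fun u => T u w)).card
    · have hlt := hcon w hw hin
      exact Finset.mem_union_left _ (Finset.mem_filter.mpr ⟨hw, hlt⟩)
    · push_neg at hin
      exact Finset.mem_union_right _ (Finset.mem_filter.mpr ⟨hw, hin⟩)
  have := Finset.card_le_card hWsub
  have := Finset.card_union_le A B
  omega


lemma split (hT : IsTournament T) {ℓ : ℕ} {γ : ℝ} (hℓ : 3 ≤ ℓ) (hγ0 : 0 < γ)
    (hγ : γ ≤ 1 / 6) (W : Finset V) (hcard : W.card = ℓ + 1) :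
    ∃ (w : V) (A B : Finset V), w ∈ W ∧ A ⊆ W ∧ B ⊆ W ∧ w ∉ A ∧ w ∉ B ∧ Disjoint A B ∧
      (∀ v ∈ W, v ∈ A ∨ v = w ∨ v ∈ B) ∧
      γ * ℓ ≤ (A.card : ℝ) ∧ A.card ≤ ℓ ∧ γ * ℓ ≤ (B.card : ℝ) ∧ B.card ≤ ℓ ∧
      (∀ v ∈ A, T v w) ∧ (∀ v ∈ B, T w v) := by
  set k : ℕ := ⌈γ * ℓ⌉₊ with hk
  have hk1 : 1 ≤ k := Nat.one_le_iff_ne_zero.mpr (by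
    rw [hk, ← Nat.pos_iff_ne_zero, Nat.ceil_pos]
    positivity)
  have hkle : k ≤ (ℓ + 5) / 6 := by
    rw [hk, Nat.ceil_le]
    have h6 : (ℓ : ℝ) ≤ 6 * ((ℓ + 5) / 6 : ℕ) := by
      have : ℓ ≤ 6 * ((ℓ + 5) / 6) := by omega
      exact_mod_cast this
    calc γ * ℓ ≤ (1/6) * ℓ := by
          apply mul_le_mul_of_nonneg_right hγ (by positivity)
      _ ≤ (((ℓ + 5) / 6 : ℕ) : ℝ) := by linarith
  have hk4 : 4 * k ≤ W.card + 1 := by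
    rw [hcard]
    have : 4 * ((ℓ + 5) / 6) ≤ ℓ + 2 := by omega
    omega
  obtain ⟨w, hw, hin, hout⟩ := exists_mid hT hk1 W hk4
  refine ⟨w, W.filter (fun u => T u w), W.filter (fun u => T w u), hw,
    Finset.filter_subset _ _, Finset.filter_subset _ _, ?_, ?_, ?_, ?_, ?_, ?_, ?_, ?_, ?_, ?_⟩
  · intro hmem
    exact hT.1 w (Finset.mem_filter.mp hmem).2
  · intro hmem
    exact hT.1 w (Finset.mem_filter.mp hmem).2
  · rw [Finset.disjoint_left]
    intro u hu1 hu2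
    have h1 := (Finset.mem_filter.mp hu1).2
    have h2 := (Finset.mem_filter.mp hu2).2
    have hne : u ≠ w := fun he => hT.1 w (he ▸ h1)
    exact ((hT.2 u w hne).mp h1) h2
  · intro v hv
    by_cases hvw : v = w
    · exact Or.inr (Or.inl hvw)
    · by_cases ht : T v w
      · exact Or.inl (Finset.mem_filter.mpr ⟨hv, ht⟩)
      · exact Or.inr (Or.inr (Finset.mem_filter.mpr ⟨hv, (hT.2 w v (Ne.symm hvw)).mpr ht⟩))
  · calc γ * ℓ ≤ (k : ℝ) := Nat.le_ceil _
      _ ≤ _ := by exact_mod_cast hin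
  · have hsub : W.filter (fun u => T u w) ⊆ W.erase w := by
      intro u hu
      exact Finset.mem_erase.mpr ⟨fun he => hT.1 w (he ▸ (Finset.mem_filter.mp hu).2),
        (Finset.mem_filter.mp hu).1⟩
    have := Finset.card_le_card hsub
    rw [Finset.card_erase_of_mem hw, hcard] at this
    omega
  · calc γ * ℓ ≤ (k : ℝ) := Nat.le_ceil _
      _ ≤ _ := by exact_mod_cast hout
  · have hsub : W.filter (fun u => T w u) ⊆ W.erase w := by
      intro u hu
      exact Finset.mem_erase.mpr ⟨fun he => hT.1 w (he ▸ (Finset.mem_filter.mp hu).2),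
        (Finset.mem_filter.mp hu).1⟩
    have := Finset.card_le_card hsub
    rw [Finset.card_erase_of_mem hw, hcard] at this
    omega
  · exact fun v hv => (Finset.mem_filter.mp hv).2
  · exact fun v hv => (Finset.mem_filter.mp hv).2


lemma elems_cons_cons {X : Finset V} {Xs : List (Finset V)} {y : V} {ys : List V} :
    elems (X :: Xs) (y :: ys) = insert y (X ∪ elems Xs ys) := by
  ext v
  rw [Finset.mem_insert, Finset.mem_union, mem_elems, mem_elems]
  simp only [List.mem_cons]
  constructor
  · rintro (⟨W, rfl | hW, hvW⟩ | rfl | h)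
    · exact Or.inr (Or.inl hvW)
    · exact Or.inr (Or.inr (Or.inl ⟨W, hW, hvW⟩))
    · exact Or.inl rfl
    · exact Or.inr (Or.inr (Or.inr h))
  · rintro (rfl | h | ⟨W, hW, hvW⟩ | h)
    · exact Or.inr (Or.inl rfl)
    · exact Or.inl ⟨X, Or.inl rfl, h⟩
    · exact Or.inl ⟨W, Or.inr hW, hvW⟩
    · exact Or.inr (Or.inr h)

lemma build (hT : IsTournament T) {ℓ : ℕ} {γ : ℝ} (hℓ : 3 ≤ ℓ) (hγ0 : 0 < γ)
    (hγ : γ ≤ 1 / 6) :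
    ∀ (ws : List V) (Ws : List (Finset V)),
    ws.length + 1 = Ws.length →
    Ws.Pairwise Disjoint →
    ws.Nodup →
    (∀ w ∈ ws, ∀ W ∈ Ws, w ∉ W) →
    (∀ W ∈ Ws, γ * ((ℓ : ℝ) + 1) ≤ (W.card : ℝ) ∧ W.card ≤ ℓ + 1) →
    Arc T Ws ws →
    ∃ Ws' ws', ws'.length + 1 = Ws'.length ∧ Ws'.Pairwise Disjoint ∧ ws'.Nodup ∧
      (∀ w ∈ ws', ∀ W ∈ Ws', w ∉ W) ∧
      (∀ W ∈ Ws', γ * (ℓ : ℝ) ≤ (W.card : ℝ) ∧ W.card ≤ ℓ) ∧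
      Arc T Ws' ws' ∧
      elems Ws' ws' = elems Ws ws ∧
      (∀ H' ∈ Ws'.head?, ∀ H ∈ Ws.head?, H' ⊆ H) := by
  have hmono : γ * (ℓ : ℝ) ≤ γ * ((ℓ : ℝ) + 1) :=
    mul_le_mul_of_nonneg_left (by linarith) hγ0.le
  intro ws
  induction ws with
  | nil =>
    intro Ws hlen hpw hnd hnm hsz harc
    obtain ⟨W, rfl⟩ : ∃ W, Ws = [W] := by
      match Ws, hlen with
      | [W], _ => exact ⟨W, rfl⟩
    have hszW := hsz W (by simp)
    by_cases hle : W.card ≤ ℓ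
    · refine ⟨[W], [], by simp, by simp, by simp, by simp, ?_, arc_nil T _, rfl, ?_⟩
      · intro W' hW'
        simp only [List.mem_singleton] at hW'
        subst hW'
        exact ⟨le_trans hmono hszW.1, hle⟩
      · intro H' hH' H hH
        simp only [List.head?] at hH' hH
        obtain rfl : W = H' := by simpa using hH'
        obtain rfl : W = H := by simpa using hH
        exact subset_rfl
    · have hcard : W.card = ℓ + 1 := by omega
      obtain ⟨w, A, B, hwW, hAW, hBW, hwA, hwB, hAB, hcover, hA1, hA2, hB1, hB2, hAa, hBa⟩ :=
        split hT hℓ hγ0 hγ W hcard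
      refine ⟨[A, B], [w], by simp, ?_, by simp, ?_, ?_, ?_, ?_, ?_⟩
      · simp [hAB]
      · intro w' hw' X hX
        simp only [List.mem_singleton] at hw'
        subst hw'
        simp only [List.mem_cons, List.mem_singleton] at hX
        rcases hX with rfl | rfl | h
        · exact hwA
        · exact hwB
        · simp at h
      · intro X hX
        simp only [List.mem_cons, List.mem_singleton] at hX
        rcases hX with rfl | rfl | h
        · exact ⟨hA1, hA2⟩
        · exact ⟨hB1, hB2⟩
        · simp at h
      · rw [arc_cons]
        refine ⟨hAa, ?_, arc_nil T _⟩
        intro Z hZ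
        obtain rfl : B = Z := by simpa using hZ
        exact hBa
      · ext v
        constructor
        · intro h
          rcases mem_elems.mp h with ⟨X, hX, hvX⟩ | hv
          · refine mem_elems.mpr (Or.inl ⟨W, List.mem_singleton.mpr rfl, ?_⟩)
            rcases List.mem_cons.mp hX with rfl | hX
            · exact hAW hvX
            · obtain rfl := List.mem_singleton.mp hX
              exact hBW hvX
          · obtain rfl := List.mem_singleton.mp hv
            exact mem_elems.mpr (Or.inl ⟨W, List.mem_singleton.mpr rfl, hwW⟩)
        · intro h
          rcases mem_elems.mp h with ⟨X, hX, hvX⟩ | hv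
          · obtain rfl := List.mem_singleton.mp hX
            rcases hcover v hvX with h1 | rfl | h1
            · exact mem_elems.mpr (Or.inl ⟨A, List.mem_cons_self, h1⟩)
            · exact mem_elems.mpr (Or.inr (List.mem_singleton.mpr rfl))
            · exact mem_elems.mpr
                (Or.inl ⟨B, List.mem_cons_of_mem _ (List.mem_singleton.mpr rfl), h1⟩)
          · simp at hv
      · intro H' hH' H hH
        obtain rfl : A = H' := by simpa using hH'
        obtain rfl : W = H := by simpa using hH
        exact hAW
  | cons w ws₂ IH =>
    intro Ws hlen hpw hnd hnm hsz harc
    obtain ⟨W, Ws₂, rfl⟩ : ∃ W Ws₂, Ws = W :: Ws₂ := by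
      cases Ws with
      | nil => simp at hlen
      | cons W Ws₂ => exact ⟨W, Ws₂, rfl⟩
    have hlen₂ : ws₂.length + 1 = Ws₂.length := by simpa using hlen
    obtain ⟨hWdis, hpw₂⟩ := List.pairwise_cons.mp hpw
    obtain ⟨hwws₂, hnd₂⟩ := List.nodup_cons.mp hnd
    have hnm₂ : ∀ w' ∈ ws₂, ∀ X ∈ Ws₂, w' ∉ X :=
      fun w' hw' X hX => hnm w' (List.mem_cons_of_mem _ hw') X (List.mem_cons_of_mem _ hX)
    have hsz₂ : ∀ X ∈ Ws₂, γ * ((ℓ : ℝ) + 1) ≤ (X.card : ℝ) ∧ X.card ≤ ℓ + 1 :=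
      fun X hX => hsz X (List.mem_cons_of_mem _ hX)
    obtain ⟨hWw, hwNext, harc₂⟩ := arc_cons.mp harc
    obtain ⟨Ws', ws', hlen', hpw', hnd', hnm', hsz', harc', helems', hhead'⟩ :=
      IH Ws₂ hlen₂ hpw₂ hnd₂ hnm₂ hsz₂ harc₂
    obtain ⟨H2, Ws2t, rfl⟩ : ∃ H Hs, Ws₂ = H :: Hs := by
      cases Ws₂ with
      | nil => simp at hlen₂
      | cons H Hs => exact ⟨H, Hs, rfl⟩
    obtain ⟨H1, Ws1t, rfl⟩ : ∃ H Hs, Ws' = H :: Hs := by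
      cases Ws' with
      | nil => simp at hlen'
      | cons H Hs => exact ⟨H, Hs, rfl⟩
    have hH12 : H1 ⊆ H2 := hhead' H1 rfl H2 rfl
    have hwH2 : ∀ v ∈ H2, T w v := hwNext H2 rfl
    have hwH1 : ∀ v ∈ H1, T w v := fun v hv => hwH2 v (hH12 hv)
    have hWdisE : Disjoint W (elems (H2 :: Ws2t) ws₂) :=
      disjoint_elems hWdis
        (fun w' hw' => hnm w' (List.mem_cons_of_mem _ hw') W (List.mem_cons_self))
    have hwE : w ∉ elems (H2 :: Ws2t) ws₂ := by
      intro hmem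
      rcases mem_elems.mp hmem with ⟨X, hX, hvX⟩ | h
      · exact hnm w (List.mem_cons_self) X (List.mem_cons_of_mem _ hX) hvX
      · exact hwws₂ h
    have hE' : elems (H1 :: Ws1t) ws' = elems (H2 :: Ws2t) ws₂ := helems'
    have hsubE : ∀ X ∈ H1 :: Ws1t, X ⊆ elems (H2 :: Ws2t) ws₂ := by
      intro X hX
      rw [← hE']
      exact subset_elems hX
    have hwsE : ∀ w' ∈ ws', w' ∈ elems (H2 :: Ws2t) ws₂ := by
      intro w' hw'
      rw [← hE']
      exact mem_elems_of_mem hw'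
    have hwnotW : w ∉ W := hnm w (List.mem_cons_self) W (List.mem_cons_self)
    by_cases hle : W.card ≤ ℓ
    · refine ⟨W :: H1 :: Ws1t, w :: ws', by simp only [List.length_cons] at hlen' ⊢; omega, ?_, ?_, ?_, ?_, ?_, ?_, ?_⟩
      · rw [List.pairwise_cons]
        refine ⟨fun X hX => hWdisE.mono_right (hsubE X hX), hpw'⟩
      · rw [List.nodup_cons]
        exact ⟨fun h => hwE (hwsE w h), hnd'⟩
      · intro w' hw' X hX
        rcases List.mem_cons.mp hw' with rfl | hw'
        · rcases List.mem_cons.mp hX with rfl | hX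
          · exact hwnotW
          · exact fun h => hwE (hsubE X hX h)
        · rcases List.mem_cons.mp hX with rfl | hX
          · exact fun h => Finset.disjoint_right.mp hWdisE (hwsE w' hw') h
          · exact hnm' w' hw' X hX
      · intro X hX
        rcases List.mem_cons.mp hX with rfl | hX
        · exact ⟨le_trans hmono (hsz X (List.mem_cons_self)).1, hle⟩
        · exact hsz' X hX
      · rw [arc_cons]
        refine ⟨hWw, ?_, harc'⟩
        intro Z hZ
        obtain rfl : H1 = Z := by simpa using hZ
        exact hwH1
      · rw [elems_cons_cons, elems_cons_cons, hE']
      · intro X hX Y hY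
        obtain rfl : W = X := by simpa using hX
        obtain rfl : W = Y := by simpa using hY
        exact subset_rfl
    · have hcard : W.card = ℓ + 1 := by
        have := (hsz W (List.mem_cons_self)).2
        omega
      obtain ⟨w₀, A, B, hwW, hAW, hBW, hwA, hwB, hAB, hcover, hA1, hA2, hB1, hB2, hAa, hBa⟩ :=
        split hT hℓ hγ0 hγ W hcard
      have hw₀E : w₀ ∉ elems (H2 :: Ws2t) ws₂ :=
        fun h => Finset.disjoint_left.mp hWdisE hwW h
      have hw₀w : w₀ ≠ w := fun h => hwnotW (h ▸ hwW)
      refine ⟨A :: B :: H1 :: Ws1t, w₀ :: w :: ws', by simp only [List.length_cons] at hlen' ⊢; omega, ?_, ?_, ?_, ?_, ?_, ?_, ?_⟩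
      · rw [List.pairwise_cons, List.pairwise_cons]
        refine ⟨?_, ?_, hpw'⟩
        · intro X hX
          rcases List.mem_cons.mp hX with rfl | hX
          · exact hAB
          · exact (hWdisE.mono_left hAW).mono_right (hsubE X hX)
        · intro X hX
          exact (hWdisE.mono_left hBW).mono_right (hsubE X hX)
      · rw [List.nodup_cons, List.nodup_cons]
        refine ⟨?_, fun h => hwE (hwsE w h), hnd'⟩
        intro h
        rcases List.mem_cons.mp h with rfl | h
        · exact hw₀w rfl
        · exact hw₀E (hwsE w₀ h)
      · intro w' hw' X hX
        rcases List.mem_cons.mp hw' with rfl | hw'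
        · rcases List.mem_cons.mp hX with rfl | hX
          · exact hwA
          · rcases List.mem_cons.mp hX with rfl | hX
            · exact hwB
            · exact fun h => hw₀E (hsubE X hX h)
        · rcases List.mem_cons.mp hw' with rfl | hw'
          · rcases List.mem_cons.mp hX with rfl | hX
            · exact fun h => hwnotW (hAW h)
            · rcases List.mem_cons.mp hX with rfl | hX
              · exact fun h => hwnotW (hBW h)
              · exact fun h => hwE (hsubE X hX h)
          · rcases List.mem_cons.mp hX with rfl | hX
            · exact fun h => Finset.disjoint_right.mp (hWdisE.mono_left hAW) (hwsE w' hw') h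
            · rcases List.mem_cons.mp hX with rfl | hX
              · exact fun h => Finset.disjoint_right.mp (hWdisE.mono_left hBW) (hwsE w' hw') h
              · exact hnm' w' hw' X hX
      · intro X hX
        rcases List.mem_cons.mp hX with rfl | hX
        · exact ⟨hA1, hA2⟩
        · rcases List.mem_cons.mp hX with rfl | hX
          · exact ⟨hB1, hB2⟩
          · exact hsz' X hX
      · rw [arc_cons]
        refine ⟨hAa, ?_, ?_⟩
        · intro Z hZ
          obtain rfl : B = Z := by simpa using hZ
          exact hBa
        · rw [arc_cons]
          refine ⟨fun v hv => hWw v (hBW hv), ?_, harc'⟩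
          intro Z hZ
          obtain rfl : H1 = Z := by simpa using hZ
          exact hwH1
      · rw [elems_cons_cons, elems_cons_cons, elems_cons_cons, hE']
        ext v
        simp only [Finset.mem_insert, Finset.mem_union]
        constructor
        · rintro (rfl | hA | rfl | hB | hE)
          · exact Or.inr (Or.inl hwW)
          · exact Or.inr (Or.inl (hAW hA))
          · exact Or.inl rfl
          · exact Or.inr (Or.inl (hBW hB))
          · exact Or.inr (Or.inr hE)
        · rintro (rfl | hW | hE)
          · exact Or.inr (Or.inr (Or.inl rfl))
          · rcases hcover v hW with h | rfl | h
            · exact Or.inr (Or.inl h)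
            · exact Or.inl rfl
            · exact Or.inr (Or.inr (Or.inr (Or.inl h)))
          · exact Or.inr (Or.inr (Or.inr (Or.inr hE)))
      · intro X hX Y hY
        obtain rfl : A = X := by simpa using hX
        obtain rfl : W = Y := by simpa using hY
        exact hAW


lemma step [Fintype V] (hT : IsTournament T) {ℓ : ℕ} {γ : ℝ} (hℓ : 3 ≤ ℓ) (hγ0 : 0 < γ)
    (hγ : γ ≤ 1 / 6) {Ws : List (Finset V)} {ws : List V}
    (h : IsHPartition T (ℓ + 1) γ Ws ws) : ∃ Ws' ws', IsHPartition T ℓ γ Ws' ws' := by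
  obtain ⟨h1, h2, h3, h4, h5, h6, h7⟩ := h
  have hsz : ∀ W ∈ Ws, γ * ((ℓ : ℝ) + 1) ≤ (W.card : ℝ) ∧ W.card ≤ ℓ + 1 := by
    intro W hW
    have := h6 W hW
    push_cast at this
    exact this
  have harc : Arc T Ws ws := h7
  obtain ⟨Ws', ws', g1, g2, g3, g4, g5, g6, g7, -⟩ :=
    build hT hℓ hγ0 hγ ws Ws h1 h2 h3 h4 hsz harc
  refine ⟨Ws', ws', g1, g2, g3, g4, ?_, g5, g6⟩
  intro v
  have hv : v ∈ elems Ws ws := mem_elems.mpr (h5 v)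
  rw [← g7] at hv
  exact mem_elems.mp hv

lemma exists_part [Fintype V] (hT : IsTournament T) {γ : ℝ} (hγ0 : 0 < γ) (hγ : γ ≤ 1 / 6) :
    ∀ d ℓ' : ℕ, 3 ≤ ℓ' → ℓ' + d = Fintype.card V →
      ∃ Ws ws, IsHPartition T ℓ' γ Ws ws := by
  intro d
  induction d with
  | zero =>
    intro ℓ' h3 hd
    have hc : (Finset.univ : Finset V).card = ℓ' := by rw [Finset.card_univ]; omega
    refine ⟨[Finset.univ], [], by simp, by simp, by simp, by simp,
      fun v => Or.inl ⟨Finset.univ, by simp, Finset.mem_univ v⟩, ?_, arc_nil T _⟩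
    intro W hW
    obtain rfl : W = (Finset.univ : Finset V) := by simpa using hW
    rw [hc]
    have hl0 : (0 : ℝ) ≤ (ℓ' : ℝ) := Nat.cast_nonneg _
    exact ⟨by nlinarith, le_refl _⟩
  | succ d ih =>
    intro ℓ' h3 hd
    obtain ⟨Ws, ws, h⟩ := ih (ℓ' + 1) (by omega) (by omega)
    exact step hT h3 hγ0 hγ h

end HAux

/-- If a tournament on `n > ℓ ≥ 3` vertices (with `0 < γ ≤ 1/6`) has an
`H(ℓ+1,γ)`-partition, then it has an `H(ℓ,γ)`-partition; consequently it has
an `H(ℓ',γ)`-partition for every `3 ≤ ℓ' ≤ n`. -/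
theorem stmt5 {V : Type*} [Fintype V] [DecidableEq V] {n ℓ : ℕ} (γ : ℝ)
    (hn : Fintype.card V = n) (T : V → V → Prop) (hT : IsTournament T)
    (hℓ : 3 ≤ ℓ) (hℓn : ℓ < n) (hγ0 : 0 < γ) (hγ : γ ≤ 1 / 6) :
    ((∃ Ws ws, IsHPartition T (ℓ + 1) γ Ws ws) → ∃ Ws ws, IsHPartition T ℓ γ Ws ws) ∧
    (∀ ℓ' : ℕ, 3 ≤ ℓ' → ℓ' ≤ n → ∃ Ws ws, IsHPartition T ℓ' γ Ws ws) := by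
  constructor
  · rintro ⟨Ws, ws, h⟩
    exact HAux.step hT hℓ hγ0 hγ h
  · intro ℓ' h3 hn'
    exact HAux.exists_part hT hγ0 hγ (n - ℓ') ℓ' h3 (by omega)
end

section
/- Let T = (T_1, …, T_n) be a collection of n tournaments on a common vertex set of size n. Then T contains a rainbow Hamilton path, i.e., a Hamilton path v_1 → v_2 → ⋯ → v_n together with an injection φ from its arcs to [n] such that each arc v_i → v_{i+1} is an arc of T_{φ(v_i → v_{i+1})}. -/
section Aux

variable {V : Type*} {n : ℕ}

/-- Rainbow path predicate: `RPath T p cs` means consecutive vertices of `p`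
are joined forward by arcs, the `k`-th arc lying in tournament `T (cs k)`. -/
inductive RPath (T : Fin n → V → V → Prop) : List V → List (Fin n) → Prop
  | nil : RPath T [] []
  | single (v : V) : RPath T [v] []
  | cons {u v : V} {c : Fin n} {p : List V} {cs : List (Fin n)} :
      T c u v → RPath T (v :: p) cs → RPath T (u :: v :: p) (c :: cs)

lemma RPath.len {T : Fin n → V → V → Prop} {p : List V} {cs : List (Fin n)}
    (h : RPath T p cs) : cs.length = p.length - 1 := by
  induction h with
  | nil => rfl
  | single v => rfl
  | cons h hp ih => simp only [List.length_cons] at ih ⊢; omega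

lemma RPath.get?_spec {T : Fin n → V → V → Prop} {p : List V} {cs : List (Fin n)}
    (h : RPath T p cs) :
    ∀ k c u w, cs[k]? = some c → p[k]? = some u → p[k+1]? = some w → T c u w := by
  induction h with
  | nil => intro k c u w hc _ _; simp at hc
  | single v => intro k c u w hc _ _; simp at hc
  | @cons u' v' c' p' cs' harc hp ih =>
    intro k c u w hc hu hw
    cases k with
    | zero =>
      simp only [List.getElem?_cons_zero, List.getElem?_cons_succ, Option.some_inj] at hc hu hw
      subst hc; subst hu; subst hw; exact harc
    | succ k =>
      exact ih k c u w (by simpa using hc) (by simpa using hu) (by simpa using hw)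

lemma insert_aux {T : Fin n → V → V → Prop} (hT : ∀ c, IsTournament (T c))
    (a b : Fin n) (v : V) (hab : a ≠ b) :
    ∀ (p : List V) (cs : List (Fin n)) (u : V), RPath T (u :: p) cs →
      v ∉ u :: p → cs.Nodup → a ∉ cs → b ∉ cs → T a u v → T b u v →
      ∃ (q : List V) (cs' : List (Fin n)), RPath T (u :: q) cs' ∧
        (u :: q).Perm (v :: u :: p) ∧ cs'.Nodup ∧
        (∀ c ∈ cs', c = a ∨ c = b ∨ c ∈ cs) := by
  intro p
  induction p with
  | nil =>
    intro cs u h hv hnd ha hb hua hub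
    refine ⟨[v], [a], .cons hua (.single v), ?_, by simp, by simp⟩
    exact List.Perm.swap v u []
  | cons w p0 ih =>
    intro cs u h hv hnd ha hb hua hub
    cases h with
    | @cons _ _ d _ cs0 harc hp0 =>
      have hvw : v ≠ w := by intro hvw; exact hv (by simp [hvw])
      have hda : d ≠ a := by intro hda; exact ha (by simp [hda])
      have hdb : d ≠ b := by intro hdb; exact hb (by simp [hdb])
      have ha0 : a ∉ cs0 := fun h' => ha (List.mem_cons_of_mem _ h')
      have hb0 : b ∉ cs0 := fun h' => hb (List.mem_cons_of_mem _ h')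
      by_cases hvwa : T a v w
      · refine ⟨v :: w :: p0, b :: a :: cs0, .cons hub (.cons hvwa hp0), ?_, ?_, ?_⟩
        · exact List.Perm.swap v u (w :: p0)
        · simp [List.nodup_cons, Ne.symm hab, ha0, hb0, hnd.of_cons]
        · intro c hc
          simp only [List.mem_cons] at hc ⊢
          tauto
      · by_cases hvwb : T b v w
        · refine ⟨v :: w :: p0, a :: b :: cs0, .cons hua (.cons hvwb hp0), ?_, ?_, ?_⟩
          · exact List.Perm.swap v u (w :: p0)
          · simp [List.nodup_cons, hab, ha0, hb0, hnd.of_cons]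
          · intro c hc
            simp only [List.mem_cons] at hc ⊢
            tauto
        · have hwa : T a w v := ((hT a).2 w v hvw.symm).mpr hvwa
          have hwb : T b w v := ((hT b).2 w v hvw.symm).mpr hvwb
          have hv0 : v ∉ w :: p0 := fun h' => hv (List.mem_cons_of_mem _ h')
          obtain ⟨q, cs'', hRP, hperm, hnd'', hcol⟩ :=
            ih cs0 w hp0 hv0 hnd.of_cons ha0 hb0 hwa hwb
          refine ⟨w :: q, d :: cs'', .cons harc hRP, ?_, ?_, ?_⟩
          · exact (hperm.cons u).trans (List.Perm.swap v u (w :: p0))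
          · rw [List.nodup_cons]
            refine ⟨fun hd => ?_, hnd''⟩
            rcases hcol d hd with h' | h' | h'
            · exact hda h'
            · exact hdb h'
            · exact (List.nodup_cons.mp hnd).1 h'
          · intro c hc
            simp only [List.mem_cons] at hc
            rcases hc with hc | hc
            · exact Or.inr (Or.inr (by simp [hc]))
            · rcases hcol c hc with h' | h' | h'
              · exact Or.inl h'
              · exact Or.inr (Or.inl h')
              · exact Or.inr (Or.inr (List.mem_cons_of_mem _ h'))

lemma insert_one {T : Fin n → V → V → Prop} (hT : ∀ c, IsTournament (T c))
    (a b : Fin n) (hab : a ≠ b) (v : V)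
    (p : List V) (cs : List (Fin n)) (hp : RPath T p cs) (hv : v ∉ p)
    (hnd : cs.Nodup) (ha : a ∉ cs) (hb : b ∉ cs) :
    ∃ p' cs', RPath T p' cs' ∧ p'.Perm (v :: p) ∧ cs'.Nodup ∧
      ∀ c ∈ cs', c = a ∨ c = b ∨ c ∈ cs := by
  cases p with
  | nil => exact ⟨[v], [], .single v, List.Perm.refl _, by simp, by simp⟩
  | cons u p0 =>
    have hne : u ≠ v := fun h => hv (by simp [h])
    by_cases hau : T a v u
    · exact ⟨v :: u :: p0, a :: cs, .cons hau hp, List.Perm.refl _,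
        List.nodup_cons.mpr ⟨ha, hnd⟩, fun c hc => by
          simp only [List.mem_cons] at hc
          tauto⟩
    · have hua : T a u v := ((hT a).2 u v hne).mpr hau
      by_cases hbu : T b v u
      · exact ⟨v :: u :: p0, b :: cs, .cons hbu hp, List.Perm.refl _,
          List.nodup_cons.mpr ⟨hb, hnd⟩, fun c hc => by
            simp only [List.mem_cons] at hc
            tauto⟩
      · have hub : T b u v := ((hT b).2 u v hne).mpr hbu
        obtain ⟨q, cs', hRP, hperm, hnd', hcol⟩ :=
          insert_aux hT a b v hab p0 cs u hp hv hnd ha hb hua hub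
        exact ⟨u :: q, cs', hRP, hperm, hnd', hcol⟩

lemma main_ind [DecidableEq V] [DecidableEq (Fin n)]
    {T : Fin n → V → V → Prop} (hT : ∀ c, IsTournament (T c)) :
    ∀ (k : ℕ) (S : Finset V) (C : Finset (Fin n)), S.card = k → C.card = k →
    ∃ p cs, RPath T p cs ∧ p.Nodup ∧ p.toFinset = S ∧ cs.Nodup ∧ ∀ c ∈ cs, c ∈ C := by
  intro k
  induction k with
  | zero =>
    intro S C hS _
    exact ⟨[], [], .nil, by simp, by simp [Finset.card_eq_zero.mp hS], by simp, by simp⟩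
  | succ k ih =>
    intro S C hS hC
    obtain ⟨v, hv⟩ : S.Nonempty := Finset.card_pos.mp (by omega)
    obtain ⟨a, haC⟩ : C.Nonempty := Finset.card_pos.mp (by omega)
    have hSe : (S.erase v).card = k := by rw [Finset.card_erase_of_mem hv, hS]; omega
    have hCe : (C.erase a).card = k := by rw [Finset.card_erase_of_mem haC, hC]; omega
    obtain ⟨p, cs, hp, hnd, hfin, hcnd, hcol⟩ := ih (S.erase v) (C.erase a) hSe hCe
    have hvnp : v ∉ p := fun h => (Finset.notMem_erase v S) (hfin ▸ List.mem_toFinset.mpr h)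
    rcases Nat.eq_zero_or_pos k with hk | hk
    · -- k = 0 : S = {v}, path [v]
      have hp0 : p = [] := by
        have : p.toFinset.card = 0 := by rw [hfin, hSe, hk]
        have := Finset.card_eq_zero.mp this
        cases p with
        | nil => rfl
        | cons x xs => exfalso; simp [List.toFinset_cons] at this
      subst hp0
      refine ⟨[v], [], .single v, by simp, ?_, by simp, by simp⟩
      have : S = {v} := by
        apply Finset.eq_singleton_iff_unique_mem.mpr
        refine ⟨hv, fun x hx => ?_⟩
        by_contra hxv
        have : x ∈ S.erase v := Finset.mem_erase.mpr ⟨hxv, hx⟩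
        rw [← hfin] at this; simp at this
      simp [this]
    · -- k ≥ 1 : find a fresh color b ∈ C.erase a not on cs
      have hplen : p.length = k := by
        rw [← List.toFinset_card_of_nodup hnd, hfin, hSe]
      have hclen : cs.length = k - 1 := by
        have := hp.len; rw [hplen] at this; exact this
      have hsub : cs.toFinset ⊆ C.erase a := fun c hc =>
        hcol c (List.mem_toFinset.mp hc)
      have hlt : cs.toFinset.card < (C.erase a).card := by
        calc cs.toFinset.card ≤ cs.length := List.toFinset_card_le cs
          _ = k - 1 := hclen
          _ < k := by omega
          _ = (C.erase a).card := hCe.symm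
      obtain ⟨b, hbC, hbcs⟩ : ∃ b ∈ C.erase a, b ∉ cs.toFinset := by
        by_contra hcon
        push_neg at hcon
        have hle := Finset.card_le_card (fun x hx => hcon x hx)
        omega
      have hba : b ≠ a := (Finset.mem_erase.mp hbC).1
      have hacs : a ∉ cs := fun h => (Finset.notMem_erase a C) (hcol a h)
      have hbcs' : b ∉ cs := fun h => hbcs (List.mem_toFinset.mpr h)
      obtain ⟨p', cs', hRP, hperm, hnd', hcol'⟩ :=
        insert_one hT a b (Ne.symm hba) v p cs hp hvnp hcnd hacs hbcs'
      refine ⟨p', cs', hRP, ?_, ?_, hnd', ?_⟩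
      · exact hperm.nodup_iff.mpr (List.nodup_cons.mpr ⟨hvnp, hnd⟩)
      · rw [List.toFinset_eq_of_perm _ _ hperm, List.toFinset_cons, hfin,
          Finset.insert_erase hv]
      · intro c hc
        rcases hcol' c hc with h' | h' | h'
        · exact h' ▸ haC
        · exact h' ▸ (Finset.mem_of_mem_erase hbC)
        · exact Finset.mem_of_mem_erase (hcol c h')

end Aux

/-- Any collection of `n` tournaments on a common `n`-vertex set contains a
rainbow Hamilton path: a Hamilton path `p` with pairwise distinct colors
`cs` (one per arc) such that each arc lies in the tournament of its color. -/
theorem stmt9 {V : Type*} [Fintype V] [DecidableEq V] {n : ℕ}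
    (hn : Fintype.card V = n)
    (T : Fin n → V → V → Prop) (hT : ∀ c, IsTournament (T c)) :
    ∃ (p : List V) (cs : List (Fin n)),
      p.Nodup ∧ (∀ v : V, v ∈ p) ∧ p.length = n ∧
      cs.Nodup ∧ cs.length = n - 1 ∧
      ∀ k : ℕ, ∀ c ∈ cs[k]?, ∀ u ∈ p[k]?, ∀ w ∈ p[k + 1]?, T c u w := by
  obtain ⟨p, cs, hp, hnd, hfin, hcnd, hcol⟩ :=
    main_ind hT n (Finset.univ : Finset V) (Finset.univ : Finset (Fin n))
      (by simp [hn]) (by simp)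
  have hmem : ∀ v : V, v ∈ p := fun v => List.mem_toFinset.mp (by rw [hfin]; simp)
  have hlen : p.length = n := by
    rw [← List.toFinset_card_of_nodup hnd, hfin, Finset.card_univ, hn]
  refine ⟨p, cs, hnd, hmem, hlen, hcnd, ?_, ?_⟩
  · rw [hp.len, hlen]
  · intro k c hc u hu w hw
    exact hp.get?_spec k c u w (Option.mem_def.mp hc) (Option.mem_def.mp hu)
      (Option.mem_def.mp hw)
end

section
/- For every n ≥ 3, there exists a collection T = (T_1, …, T_n) of tournaments on vertex set [n] such that T_3, …, T_n are strongly connected and T contains no rainbow Hamilton cycle. Concretely, let T_1 = T_2 be the transitive tournament with arcs i→j for all 1 ≤ i < j ≤ n, and let T_3 = ⋯ = T_n be the tournament with arcs i→j for all i+2 ≤ j and arcs j→i for all j = i+1; then T has no rainbow Hamilton cycle. -/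
/-- The transitive tournament on `Fin n`: arcs `i → j` for `i < j`. -/
def TransT (n : ℕ) (i j : Fin n) : Prop := i < j

/-- The strongly connected tournament on `Fin n` with arcs `i → j` whenever
`i + 2 ≤ j`, and backward arcs `j → i` whenever `j = i + 1`. -/
def BackT (n : ℕ) (i j : Fin n) : Prop := (i : ℕ) + 2 ≤ (j : ℕ) ∨ (j : ℕ) + 1 = (i : ℕ)

/-- The collection `(T_1, …, T_n)` with `T_1 = T_2` transitive and
`T_3 = ⋯ = T_n = BackT` (colors `0,1` transitive, colors `≥ 2` BackT). -/
def Coll (n : ℕ) (c : Fin n) : Fin n → Fin n → Prop :=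
  if (c : ℕ) < 2 then TransT n else BackT n

open Fin.NatCast Fin.CommRing

/-- For `n ≥ 3`, in the collection `Coll n` the tournaments `T_3, …, T_n` are
strongly connected, yet the collection has no rainbow Hamilton cycle: there is
no cyclic Hamilton arrangement `e` with a bijective coloring `φ` of its `n`
arcs by the `n` colors such that each arc lies in the tournament of its color. -/
theorem stmt12 (n : ℕ) [NeZero n] (hn : 3 ≤ n) :
    (∀ c : Fin n, 2 ≤ (c : ℕ) →
      ∀ x y : Fin n, Relation.ReflTransGen (Coll n c) x y) ∧
    ¬ ∃ (e : Fin n ≃ Fin n) (φ : Fin n ≃ Fin n),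
        ∀ i : Fin n, Coll n (φ i) (e i) (e (i + 1)) := by
  constructor
  · -- strong connectivity of BackT
    intro c hc x y
    have hcoll : Coll n c = BackT n := by
      unfold Coll; rw [if_neg (by omega)]
    rw [hcoll]
    have to0 : ∀ m : ℕ, ∀ x : Fin n, (x : ℕ) = m →
        Relation.ReflTransGen (BackT n) x 0 := by
      intro m
      induction m with
      | zero =>
        intro x hx
        have : x = 0 := Fin.ext (by simp [hx])
        rw [this]
      | succ m ih =>
        intro x hx
        have hm : m < n := by have := x.isLt; omega
        refine Relation.ReflTransGen.head ?_ (ih ⟨m, hm⟩ rfl)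
        exact Or.inr (by simp [hx])
    have from0 : ∀ y : Fin n, Relation.ReflTransGen (BackT n) 0 y := by
      intro y
      rcases Nat.lt_or_ge (y : ℕ) 2 with hy | hy
      · rcases Nat.lt_or_ge (y : ℕ) 1 with hy0 | hy1
        · have : y = 0 := Fin.ext (by rw [Fin.val_zero]; omega)
          rw [this]
        · -- y.val = 1 : go 0 → 2 → 1
          have h2 : (2 : ℕ) < n := by omega
          refine Relation.ReflTransGen.head (b := ⟨2, h2⟩) ?_
            (Relation.ReflTransGen.single ?_)
          · exact Or.inl (by simp)
          · exact Or.inr (by simp; omega)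
      · exact Relation.ReflTransGen.single (Or.inl (by simp; omega))
    exact (to0 _ x rfl).trans (from0 y)
  · -- no rainbow Hamilton cycle
    rintro ⟨e, φ, h⟩
    set i₀ := e.symm 0 with hi₀
    have harc : ∀ i : Fin n,
        ((e i : ℕ) < (e (i+1) : ℕ)) ∨ ((e (i+1) : ℕ) + 1 = (e i : ℕ)) := by
      intro i
      have hi := h i
      unfold Coll at hi
      split at hi
      · exact Or.inl (Fin.lt_def.mp hi)
      · rcases hi with h1 | h1
        · exact Or.inl (by omega)
        · exact Or.inr h1
    have key : ∀ k, k < n → ((e (i₀ - (k : Fin n))) : ℕ) = k := by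
      intro k
      induction k using Nat.strong_induction_on with
      | _ k ih =>
        intro hk
        rcases Nat.eq_zero_or_pos k with rfl | hk0
        · simp [hi₀]
        · obtain ⟨m, rfl⟩ : ∃ m, k = m + 1 := ⟨k - 1, by omega⟩
          set i : Fin n := i₀ - ((m+1 : ℕ) : Fin n) with hi
          have hsucc : i + 1 = i₀ - ((m : ℕ) : Fin n) := by
            rw [hi]; push_cast; ring
          have hIH : ((e (i + 1)) : ℕ) = m := by
            rw [hsucc]; exact ih m (by omega) (by omega)
          rcases harc i with hf | hb
          · exfalso
            have hjm : ((e i) : ℕ) < m := by omega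
            set j := ((e i) : ℕ) with hj
            have hje : ((e (i₀ - (j : Fin n))) : ℕ) = j :=
              ih j (by omega) (by omega)
            have heq : e (i₀ - (j : Fin n)) = e i := Fin.ext (by omega)
            have hii : i₀ - (j : Fin n) = i := e.injective heq
            rw [hi] at hii
            have hcast : ((j : ℕ) : Fin n) = ((m+1 : ℕ) : Fin n) :=
              sub_right_inj.mp hii
            have : j = m + 1 := by
              have h1 : (((j : ℕ) : Fin n) : ℕ) = j :=
                Fin.val_cast_of_lt (by omega)
              have h2 : (((m+1 : ℕ) : Fin n) : ℕ) = m+1 :=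
                Fin.val_cast_of_lt (by omega)
              rw [← h1, hcast, h2]
            omega
          · omega
    have honly : ∀ i : Fin n, (e i : ℕ) < (e (i+1) : ℕ) → i = i₀ := by
      intro i hf
      by_contra hne
      set k := ((i₀ - i) : Fin n).val with hk
      have hkn : k < n := (i₀ - i).isLt
      have hk0 : k ≠ 0 := by
        intro h0
        apply hne
        have hsub : i₀ - i = 0 := Fin.ext (by rw [← hk, h0]; simp)
        exact (sub_eq_zero.mp hsub).symm
      have hik : i = i₀ - (k : Fin n) := by
        rw [hk, Fin.cast_val_eq_self]; ring
      have h1 : (e i : ℕ) = k := by rw [hik]; exact key k hkn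
      have hsucc : i + 1 = i₀ - ((k-1 : ℕ) : Fin n) := by
        rw [hik]
        have : ((k : ℕ) : Fin n) = ((k-1 : ℕ) : Fin n) + 1 := by
          conv_lhs => rw [show k = (k-1)+1 by omega]
          push_cast; ring
        rw [this]; ring
      have h2 : (e (i+1) : ℕ) = k - 1 := by
        rw [hsucc]; exact key (k-1) (by omega)
      omega
    have hA : ∀ c : Fin n, (c : ℕ) < 2 → φ.symm c = i₀ := by
      intro c hc
      apply honly
      have hi := h (φ.symm c)
      rw [Equiv.apply_symm_apply] at hi
      unfold Coll at hi
      rw [if_pos hc] at hi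
      exact Fin.lt_def.mp hi
    have hv1 : ((1 : Fin n) : ℕ) = 1 := by
      have h1n : 1 < n := by omega
      simp [Fin.val_one', Nat.mod_eq_of_lt h1n]
    have h01 : φ.symm 0 = φ.symm 1 := by
      rw [hA 0 (by simp), hA 1 (by rw [hv1]; norm_num)]
    have : (0 : Fin n) = 1 := φ.symm.injective h01
    have : ((0 : Fin n) : ℕ) = ((1 : Fin n) : ℕ) := congrArg Fin.val this
    simp [hv1] at this
    omega
end

section
/- Let T = (T_1, …, T_m) be a collection of strongly connected tournaments on a common vertex set V with m ≥ |V| - 1 ≥ 1. Then for every ordered pair of distinct vertices x, y ∈ V, there exists a rainbow directed path from x to y, i.e., a directed path whose arcs can be assigned pairwise distinct colors from [m] with each arc lying in the tournament of its color. -/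
section aux

variable {V : Type*} [Fintype V] [DecidableEq V] {m : ℕ}

/-- A rainbow path from `x` to `b` with vertices in `S` and colors in `C`. -/
def RPath14 (T : Fin m → V → V → Prop) (x b : V) (S : Finset V)
    (C : Finset (Fin m)) : Prop :=
  ∃ (p : List V) (cs : List (Fin m)),
    p.Nodup ∧ cs.Nodup ∧ cs.length + 1 = p.length ∧
    p.head? = some x ∧ p.getLast? = some b ∧
    (∀ v ∈ p, v ∈ S) ∧ (∀ c ∈ cs, c ∈ C) ∧
    ∀ k : ℕ, ∀ c ∈ cs[k]?, ∀ u ∈ p[k]?, ∀ w ∈ p[k + 1]?, T c u w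

lemma rpath14_mono {T : Fin m → V → V → Prop} {x b : V} {S S' : Finset V}
    {C C' : Finset (Fin m)} (hS : S ⊆ S') (hC : C ⊆ C')
    (h : RPath14 T x b S C) : RPath14 T x b S' C' := by
  obtain ⟨p, cs, h1, h2, h3, h4, h5, h6, h7, h8⟩ := h
  exact ⟨p, cs, h1, h2, h3, h4, h5, fun v hv => hS (h6 v hv),
    fun c hc => hC (h7 c hc), h8⟩

lemma rpath14_single {T : Fin m → V → V → Prop} {x : V} {S : Finset V}
    {C : Finset (Fin m)} (hx : x ∈ S) : RPath14 T x x S C := by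
  refine ⟨[x], [], by simp, by simp, by simp, by simp, by simp, by simpa, by simp, ?_⟩
  intro k c hc
  simp at hc

lemma rpath14_extend {T : Fin m → V → V → Prop} {x a b : V} {S : Finset V}
    {C : Finset (Fin m)} {c : Fin m} (h : RPath14 T x a S C) (hb : b ∉ S)
    (hc : c ∉ C) (harc : T c a b) :
    RPath14 T x b (insert b S) (insert c C) := by
  obtain ⟨p, cs, h1, h2, h3, h4, h5, h6, h7, h8⟩ := h
  have hbp : b ∉ p := fun hmem => hb (h6 b hmem)
  have hccs : c ∉ cs := fun hmem => hc (h7 c hmem)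
  have hpne : p ≠ [] := by
    intro h; subst h; simp at h4
  refine ⟨p ++ [b], cs ++ [c], ?_, ?_, ?_, ?_, ?_, ?_, ?_, ?_⟩
  · simp [List.nodup_append, h1, hbp]
    intro v hv h; exact hbp (h ▸ hv)
  · simp [List.nodup_append, h2, hccs]
    intro v hv h; exact hccs (h ▸ hv)
  · simp [← h3]
  · rw [List.head?_append_of_ne_nil _ hpne] -- maybe wrong name
    exact h4
  · simp [List.getLast?_concat]
  · intro v hv
    rcases List.mem_append.mp hv with h' | h'
    · exact Finset.mem_insert_of_mem (h6 v h')
    · simp at h'; subst h'; exact Finset.mem_insert_self _ _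
  · intro d hd
    rcases List.mem_append.mp hd with h' | h'
    · exact Finset.mem_insert_of_mem (h7 d h')
    · simp at h'; subst h'; exact Finset.mem_insert_self _ _
  · intro k d hd u hu w hw
    rcases lt_trichotomy k cs.length with hk | hk | hk
    · have e1 : (cs ++ [c])[k]? = cs[k]? := List.getElem?_append_left hk
      have e2 : (p ++ [b])[k]? = p[k]? := List.getElem?_append_left (by omega)
      have e3 : (p ++ [b])[k+1]? = p[k+1]? := List.getElem?_append_left (by omega)
      rw [e1] at hd; rw [e2] at hu; rw [e3] at hw
      exact h8 k d hd u hu w hw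
    · subst hk
      have e1 : (cs ++ [c])[cs.length]? = some c := List.getElem?_concat_length
      have e2 : (p ++ [b])[cs.length]? = p[cs.length]? := List.getElem?_append_left (by omega)
      have e3 : (p ++ [b])[cs.length + 1]? = some b := by
        rw [h3]; exact List.getElem?_concat_length
      rw [e1] at hd; rw [e2] at hu; rw [e3] at hw
      simp only [Option.mem_def, Option.some.injEq] at hd hw
      subst hd; subst hw
      have : p[cs.length]? = p.getLast? := by
        rw [List.getLast?_eq_getElem? ] -- maybe wrong name
        congr 1
        omega
      rw [this, h5] at hu
      simp only [Option.mem_def, Option.some.injEq] at hu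
      subst hu
      exact harc
    · have : (cs ++ [c])[k]? = none := by
        rw [List.getElem?_eq_none_iff]
        simp; omega
      rw [this] at hd
      simp at hd

lemma cross14 {α : Type*} {R : α → α → Prop} {S : Finset α} {x : α}
    (hx : x ∈ S) : ∀ z, Relation.ReflTransGen R x z → z ∉ S →
    ∃ a b, a ∈ S ∧ b ∉ S ∧ R a b := by
  intro z h
  induction h with
  | refl => intro h'; exact absurd hx h'
  | @tail b c h₁ h₂ ih =>
    intro hc
    by_cases hb : b ∈ S
    · exact ⟨b, c, hb, hc, h₂⟩
    · exact ih hb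

end aux

/-- For a collection of `m ≥ |V| - 1 ≥ 1` strongly connected tournaments on a
common vertex set `V`, between any two distinct vertices `x, y` there is a
rainbow directed path from `x` to `y`. -/
theorem stmt14 {V : Type*} [Fintype V] [DecidableEq V] {m : ℕ}
    (T : Fin m → V → V → Prop) (hT : ∀ c, IsTournament (T c))
    (hsc : ∀ c, ∀ x y : V, Relation.ReflTransGen (T c) x y)
    (hm : Fintype.card V - 1 ≤ m) (hV : 2 ≤ Fintype.card V) :
    ∀ x y : V, x ≠ y →
      ∃ (p : List V) (cs : List (Fin m)),
        p.Nodup ∧ cs.Nodup ∧ cs.length + 1 = p.length ∧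
        p.head? = some x ∧ p.getLast? = some y ∧
        ∀ k : ℕ, ∀ c ∈ cs[k]?, ∀ u ∈ p[k]?, ∀ w ∈ p[k + 1]?, T c u w := by
  intro x y _
  have grow : ∀ (n : ℕ) (S : Finset V) (C : Finset (Fin m)),
      (Finset.univ \ S).card ≤ n → x ∈ S → C.card + 1 ≤ S.card →
      (∀ b ∈ S, RPath14 T x b S C) →
      ∃ (p : List V) (cs : List (Fin m)),
        p.Nodup ∧ cs.Nodup ∧ cs.length + 1 = p.length ∧
        p.head? = some x ∧ p.getLast? = some y ∧
        ∀ k : ℕ, ∀ c ∈ cs[k]?, ∀ u ∈ p[k]?, ∀ w ∈ p[k + 1]?, T c u w := by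
    intro n
    induction n with
    | zero =>
      intro S C hcard hx hC hpaths
      have hy : y ∈ S := by
        by_contra hy
        have : y ∈ Finset.univ \ S := by simp [hy]
        have := Finset.card_pos.mpr ⟨y, this⟩
        omega
      obtain ⟨p, cs, h1, h2, h3, h4, h5, _, _, h8⟩ := hpaths y hy
      exact ⟨p, cs, h1, h2, h3, h4, h5, h8⟩
    | succ n ih =>
      intro S C hcard hx hC hpaths
      by_cases hy : y ∈ S
      · obtain ⟨p, cs, h1, h2, h3, h4, h5, _, _, h8⟩ := hpaths y hy
        exact ⟨p, cs, h1, h2, h3, h4, h5, h8⟩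
      · -- pick a fresh color
        have hScard : S.card < Fintype.card V := by
          have : S ⊂ Finset.univ := Finset.ssubset_univ_iff.mpr (by
            intro h; subst h; exact hy (Finset.mem_univ y))
          simpa [Finset.card_univ] using Finset.card_lt_card this
        have hCm : C.card < m := by omega
        have : C ≠ Finset.univ := by
          intro h
          rw [h, Finset.card_univ, Fintype.card_fin] at hCm
          omega
        obtain ⟨c, hc⟩ : ∃ c, c ∉ C := by
          by_contra h
          push_neg at h
          exact this (Finset.eq_univ_iff_forall.mpr h)
        obtain ⟨a, b, haS, hbS, harc⟩ := cross14 hx y (hsc c x y) hy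
        have hbmem : b ∈ Finset.univ \ S := by simp [hbS]
        have hnewcard : (Finset.univ \ insert b S).card ≤ n := by
          have : Finset.univ \ insert b S = (Finset.univ \ S).erase b := by
            ext v; simp [and_comm]
          rw [this, Finset.card_erase_of_mem hbmem]
          have := Finset.card_pos.mpr ⟨b, hbmem⟩
          omega
        refine ih (insert b S) (insert c C) hnewcard (Finset.mem_insert_of_mem hx) ?_ ?_
        · rw [Finset.card_insert_of_notMem hbS]
          calc (insert c C).card + 1 ≤ C.card + 1 + 1 := by
                have := Finset.card_insert_le c C; omega
            _ ≤ S.card + 1 := by omega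
        · intro b' hb'
          rcases Finset.mem_insert.mp hb' with hb' | hb'
          · subst hb'
            exact rpath14_extend (hpaths a haS) hbS hc harc
          · exact rpath14_mono (Finset.subset_insert _ _) (Finset.subset_insert _ _)
              (hpaths b' hb')
  exact grow (Finset.univ \ ({x} : Finset V)).card {x} ∅ le_rfl (Finset.mem_singleton_self x)
    (by simp) (fun b hb => by rw [Finset.mem_singleton] at hb; rw [hb]; exact rpath14_single (Finset.mem_singleton_self x))
end

section
/- Let T = (T_1, …, T_m) be a collection of tournaments on common vertex set V and let P = u_1 → ⋯ → u_r be a rainbow path of maximum length in T (over all rainbow paths). If r < |V|, then m ≤ r, i.e., the number of unused colors is at most one. Equivalently: if m ≥ |V| then every maximum-length rainbow path is a Hamilton path. -/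
section Aux

variable {V : Type*} {m : ℕ}

/-- Inductive characterization of a rainbow path (colors recorded in order). -/
inductive Rainbow (T : Fin m → V → V → Prop) : List V → List (Fin m) → Prop
  | single (u : V) : Rainbow T [u] []
  | cons {u w : V} {p : List V} {c : Fin m} {cs : List (Fin m)} :
      T c u w → Rainbow T (w :: p) cs → Rainbow T (u :: w :: p) (c :: cs)

lemma Rainbow.length_eq {T : Fin m → V → V → Prop} {p : List V} {cs : List (Fin m)}
    (h : Rainbow T p cs) : cs.length + 1 = p.length := by
  induction h with
  | single => rfl
  | cons _ _ ih => simp_all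

lemma Rainbow.adj {T : Fin m → V → V → Prop} {p : List V} {cs : List (Fin m)}
    (h : Rainbow T p cs) :
    ∀ k : ℕ, ∀ c ∈ cs[k]?, ∀ u ∈ p[k]?, ∀ w ∈ p[k + 1]?, T c u w := by
  induction h with
  | single => intro k c hc; simp at hc
  | cons ht hr ih =>
    intro k c hc u hu w hw
    match k with
    | 0 =>
      simp only [List.getElem?_cons_zero, List.getElem?_cons_succ, Option.mem_def, Option.some.injEq] at hc hu hw
      subst hc; subst hu; subst hw; exact ht
    | k + 1 =>
      simp only [List.getElem?_cons_succ] at hc hu hw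
      exact ih k c hc u hu w hw

lemma rainbow_of_adj (T : Fin m → V → V → Prop) :
    ∀ (cs : List (Fin m)) (p : List V), cs.length + 1 = p.length →
      (∀ k : ℕ, ∀ c ∈ cs[k]?, ∀ u ∈ p[k]?, ∀ w ∈ p[k + 1]?, T c u w) →
      Rainbow T p cs := by
  intro cs
  induction cs with
  | nil =>
    intro p hl _
    obtain ⟨u, rfl⟩ : ∃ u, p = [u] := by
      cases p with
      | nil => simp at hl
      | cons a t =>
        cases t with
        | nil => exact ⟨a, rfl⟩
        | cons b t => simp at hl
    exact .single u
  | cons c cs ih =>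
    intro p hl hadj
    obtain ⟨u, w, q, rfl⟩ : ∃ u w q, p = u :: w :: q := by
      cases p with
      | nil => simp at hl
      | cons a t =>
        cases t with
        | nil => simp at hl
        | cons b t => exact ⟨a, b, t, rfl⟩
    refine .cons (hadj 0 c rfl u rfl w rfl) (ih (w :: q) (by simpa using hl) ?_)
    intro k d hd x hx y hy
    exact hadj (k + 1) d hd x hx y hy

lemma tourn_total {T : V → V → Prop} (h : IsTournament T) {u v : V} (hne : u ≠ v)
    (hnot : ¬ T u v) : T v u := by
  by_contra h'
  exact hnot ((h.2 u v hne).mpr h')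

/-- Key extension lemma: if both fresh colors point from the head of the path to `v`,
then `v` can be inserted somewhere (keeping the head), using at most the two fresh
colors plus old ones. -/
lemma aux_extend {T : Fin m → V → V → Prop} (hT : ∀ c, IsTournament (T c))
    {v : V} {c1 c2 : Fin m} (hne : c1 ≠ c2) :
    ∀ (rest : List V) (u : V) (cs : List (Fin m)),
      Rainbow T (u :: rest) cs → cs.Nodup →
      v ∉ u :: rest → c1 ∉ cs → c2 ∉ cs →
      T c1 u v → T c2 u v →
      ∃ tail ds, Rainbow T (u :: tail) ds ∧ tail.Perm (v :: rest) ∧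
        ds.Nodup ∧ ∀ x ∈ ds, x = c1 ∨ x = c2 ∨ x ∈ cs := by
  intro rest
  induction rest with
  | nil =>
    intro u cs hr _ _ _ _ h1 _
    cases hr
    exact ⟨[v], [c1], .cons h1 (.single v), List.Perm.refl _, by simp, by simp⟩
  | cons w rest ih =>
    intro u cs hr hcnd hv hc1 hc2 h1 h2
    obtain ⟨c, cs', rfl, hcw, hr'⟩ :
        ∃ c cs', cs = c :: cs' ∧ T c u w ∧ Rainbow T (w :: rest) cs' := by
      cases hr with
      | cons h h' => exact ⟨_, _, rfl, h, h'⟩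
    have hc1' : c1 ∉ cs' := fun h => hc1 (List.mem_cons_of_mem _ h)
    have hc2' : c2 ∉ cs' := fun h => hc2 (List.mem_cons_of_mem _ h)
    have hc1c : c ≠ c1 := fun h => hc1 (h ▸ List.mem_cons_self)
    have hc2c : c ≠ c2 := fun h => hc2 (h ▸ List.mem_cons_self)
    have hvw : v ≠ w := by
      intro h; exact hv (h ▸ List.mem_cons_of_mem _ (List.mem_cons_self))
    have hcnd' : cs'.Nodup := (List.nodup_cons.mp hcnd).2
    have hccs' : c ∉ cs' := (List.nodup_cons.mp hcnd).1
    by_cases hvw1 : T c1 v w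
    · -- insert v between u and w with colors c2 (u→v) and c1 (v→w)
      refine ⟨v :: w :: rest, c2 :: c1 :: cs', .cons h2 (.cons hvw1 hr'),
        List.Perm.refl _, ?_, ?_⟩
      · simp only [List.nodup_cons]
        exact ⟨by simp [Ne.symm hne, hc2'], hc1', hcnd'⟩
      · intro x hx
        simp only [List.mem_cons] at hx ⊢
        rcases hx with rfl | rfl | hx
        · exact Or.inr (Or.inl rfl)
        · exact Or.inl rfl
        · exact Or.inr (Or.inr (Or.inr hx))
    · have hwv1 : T c1 w v := tourn_total (hT c1) hvw hvw1
      by_cases hvw2 : T c2 v w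
      · -- insert v between u and w with colors c1 (u→v) and c2 (v→w)
        refine ⟨v :: w :: rest, c1 :: c2 :: cs', .cons h1 (.cons hvw2 hr'),
          List.Perm.refl _, ?_, ?_⟩
        · simp only [List.nodup_cons]
          exact ⟨by simp [hne, hc1'], hc2', hcnd'⟩
        · intro x hx
          simp only [List.mem_cons] at hx ⊢
          rcases hx with rfl | rfl | hx
          · exact Or.inl rfl
          · exact Or.inr (Or.inl rfl)
          · exact Or.inr (Or.inr (Or.inr hx))
      · have hwv2 : T c2 w v := tourn_total (hT c2) hvw hvw2
        have hv' : v ∉ w :: rest := fun h => hv (List.mem_cons_of_mem _ h)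
        obtain ⟨tail, ds, hR, hperm, hdnd, hdsub⟩ :=
          ih w cs' hr' hcnd' hv' hc1' hc2' hwv1 hwv2
        refine ⟨w :: tail, c :: ds, .cons hcw hR,
          (hperm.cons w).trans (List.Perm.swap _ _ _), ?_, ?_⟩
        · refine List.nodup_cons.mpr ⟨?_, hdnd⟩
          intro hcd
          rcases hdsub c hcd with rfl | rfl | h
          · exact hc1c rfl
          · exact hc2c rfl
          · exact hccs' h
        · intro x hx
          rcases List.mem_cons.mp hx with rfl | hx
          · exact Or.inr (Or.inr (List.mem_cons_self))
          · rcases hdsub x hx with h | h | h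
            · exact Or.inl h
            · exact Or.inr (Or.inl h)
            · exact Or.inr (Or.inr (List.mem_cons_of_mem _ h))

end Aux

/-- If `p` (with colors `cs`) is a rainbow path of maximum length over all
rainbow paths in a collection of `m` tournaments on `V`, and `p` is not a
Hamilton path (its number of vertices is less than `|V|`), then `m ≤ |V(p)|`,
i.e. at most one color is unused. Equivalently, if `m ≥ |V|` then every
maximum-length rainbow path is Hamilton. -/
theorem stmt16 {V : Type*} [Fintype V] [DecidableEq V] {m : ℕ}
    (T : Fin m → V → V → Prop) (hT : ∀ c, IsTournament (T c))
    (p : List V) (cs : List (Fin m))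
    (hnd : p.Nodup) (hcnd : cs.Nodup) (hlen : cs.length + 1 = p.length)
    (hadj : ∀ k : ℕ, ∀ c ∈ cs[k]?, ∀ u ∈ p[k]?, ∀ w ∈ p[k + 1]?, T c u w)
    (hmax : ∀ (q : List V) (ds : List (Fin m)),
      q.Nodup → ds.Nodup → ds.length + 1 = q.length →
      (∀ k : ℕ, ∀ c ∈ ds[k]?, ∀ u ∈ q[k]?, ∀ w ∈ q[k + 1]?, T c u w) →
      q.length ≤ p.length) :
    p.length < Fintype.card V → m ≤ p.length := by
  intro hlt
  by_contra hm
  push_neg at hm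
  -- a vertex not on the path
  obtain ⟨v, hv⟩ : ∃ v : V, v ∉ p := by
    by_contra h
    push_neg at h
    have hsub : (Finset.univ : Finset V) ⊆ p.toFinset := fun x _ =>
      List.mem_toFinset.mpr (h x)
    have := Finset.card_le_card hsub
    rw [List.toFinset_card_of_nodup hnd] at this
    simp only [Finset.card_univ] at this
    omega
  -- two fresh colors
  obtain ⟨c1, hc1s, c2, hc2s, hne⟩ :
      ∃ c1 ∈ (Finset.univ \ cs.toFinset : Finset (Fin m)),
        ∃ c2 ∈ (Finset.univ \ cs.toFinset : Finset (Fin m)), c1 ≠ c2 := by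
    refine Finset.one_lt_card.mp ?_
    have hcard : (Finset.univ \ cs.toFinset : Finset (Fin m)).card
        = m - cs.toFinset.card := by
      rw [Finset.card_sdiff_of_subset (Finset.subset_univ _)]
      simp
    have hle : cs.toFinset.card = cs.length := List.toFinset_card_of_nodup hcnd
    omega
  have hc1 : c1 ∉ cs := fun h => (Finset.mem_sdiff.mp hc1s).2 (List.mem_toFinset.mpr h)
  have hc2 : c2 ∉ cs := fun h => (Finset.mem_sdiff.mp hc2s).2 (List.mem_toFinset.mpr h)
  -- the path is nonempty
  obtain ⟨u, rest, rfl⟩ : ∃ u rest, p = u :: rest := by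
    cases p with
    | nil => simp at hlen
    | cons a t => exact ⟨a, t, rfl⟩
  have rp : Rainbow T (u :: rest) cs := rainbow_of_adj T cs (u :: rest) hlen hadj
  have hvu : v ≠ u := fun h => hv (h ▸ List.mem_cons_self)
  have contra : ∀ (q : List V) (ds : List (Fin m)), Rainbow T q ds → q.Nodup → ds.Nodup →
      q.length = (u :: rest).length + 1 → False := by
    intro q ds hq hqnd hdnd hql
    have := hmax q ds hqnd hdnd hq.length_eq hq.adj
    omega
  by_cases h1 : T c1 v u
  · exact contra (v :: u :: rest) (c1 :: cs) (.cons h1 rp)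
      (List.nodup_cons.mpr ⟨hv, hnd⟩) (List.nodup_cons.mpr ⟨hc1, hcnd⟩) rfl
  · have h1' : T c1 u v := tourn_total (hT c1) hvu h1
    by_cases h2 : T c2 v u
    · exact contra (v :: u :: rest) (c2 :: cs) (.cons h2 rp)
        (List.nodup_cons.mpr ⟨hv, hnd⟩) (List.nodup_cons.mpr ⟨hc2, hcnd⟩) rfl
    · have h2' : T c2 u v := tourn_total (hT c2) hvu h2
      obtain ⟨tail, ds, hR, hperm, hdnd, _⟩ :=
        aux_extend hT hne rest u cs rp hcnd hv hc1 hc2 h1' h2'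
      have hqnd : (u :: tail).Nodup := by
        have hperm' : (u :: tail).Perm (v :: u :: rest) :=
          (hperm.cons u).trans (List.Perm.swap _ _ _)
        exact hperm'.nodup_iff.mpr (List.nodup_cons.mpr ⟨hv, hnd⟩)
      have hql : (u :: tail).length = (u :: rest).length + 1 := by
        have := hperm.length_eq
        simp_all
      exact contra (u :: tail) ds hR hqnd hdnd hql
end
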